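/- arXiv:1908.03801 — 3 statements merged into one kernel-verified Lean document; each statement's English description precedes it below -/
import Mathlib

section
/- Let Γ be a finitely generated group and γ_1, γ_2 ∈ Γ. Then the following are equivalent: (i) for every finite group G and every g ∈ G, the number of homomorphisms φ : Γ → G with φ(γ_1) = g equals the number with φ(γ_2) = g; (ii) for every finite group G and every g ∈ G, the number of surjective homomorphisms φ : Γ → G with φ(γ_1) = g equals the number of surjective homomorphisms with φ(γ_2) = g. -/
open Function

section helpers

variable {Γ : Type} [Group Γ] [Group.FG Γ]

instance finiteHom (G : Type) [Group G] [Finite G] : Finite (Γ →* G) := by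
  obtain ⟨S, hS, hfin⟩ := Group.fg_iff.mp ‹Group.FG Γ›
  have : Finite S := hfin
  refine Finite.of_injective (fun φ => fun s : S => φ s) ?_
  intro φ ψ h
  refine MonoidHom.eq_of_eqOn_dense hS ?_
  intro x hx
  exact congrFun h ⟨x, hx⟩

instance finiteSubgroup (G : Type) [Group G] [Finite G] : Finite (Subgroup G) :=
  Finite.of_injective (fun H : Subgroup G => (H : Set G)) SetLike.coe_injective

lemma natCard_sigma {ι : Type} [Fintype ι] (f : ι → Type) [∀ i, Finite (f i)] :
    Nat.card (Σ i, f i) = ∑ i, Nat.card (f i) := by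
  have := fun i => Fintype.ofFinite (f i)
  simp [Nat.card_eq_fintype_card]

/-- Decomposition of homs by image. -/
lemma hom_card_eq_sum (G : Type) [Group G] [Finite G] [Fintype (Subgroup G)] (γ : Γ) (g : G) :
    Nat.card {φ : Γ →* G // φ γ = g} =
      ∑ H : Subgroup G, Nat.card {ψ : Γ →* H // Surjective ψ ∧ (ψ γ : G) = g} := by
  classical
  rw [← natCard_sigma]
  refine Nat.card_congr (Equiv.ofBijective
    (fun x : Σ H : Subgroup G, {ψ : Γ →* H // Surjective ψ ∧ (ψ γ : G) = g} =>
      (⟨x.1.subtype.comp x.2.1, x.2.2.2⟩ : {φ : Γ →* G // φ γ = g})) ⟨?_, ?_⟩).symm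
  · rintro ⟨H₁, ψ₁, hs₁, hγ₁⟩ ⟨H₂, ψ₂, hs₂, hγ₂⟩ h
    simp only [Subtype.mk.injEq] at h
    have h : H₁.subtype.comp ψ₁ = H₂.subtype.comp ψ₂ := congrArg Subtype.val h
    have hr : H₁ = H₂ := by
      have e1 : (H₁.subtype.comp ψ₁).range = H₁ := by
        rw [MonoidHom.range_comp, MonoidHom.range_eq_top.mpr hs₁, ← MonoidHom.range_eq_map,
          Subgroup.range_subtype]
      have e2 : (H₂.subtype.comp ψ₂).range = H₂ := by
        rw [MonoidHom.range_comp, MonoidHom.range_eq_top.mpr hs₂, ← MonoidHom.range_eq_map,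
          Subgroup.range_subtype]
      rw [← e1, ← e2, h]
    subst hr
    have hψ : ψ₁ = ψ₂ := by
      ext x
      exact congrArg (fun f : Γ →* G => f x) h
    subst hψ
    rfl
  · rintro ⟨φ, hφ⟩
    refine ⟨⟨φ.range, φ.rangeRestrict, φ.rangeRestrict_surjective, by simp [hφ]⟩, ?_⟩
    ext x
    rfl

/-- epi into ⊤ vs epi into G -/
lemma epi_top_card (G : Type) [Group G] [Finite G] (γ : Γ) (g : G) :
    Nat.card {ψ : Γ →* (⊤ : Subgroup G) // Surjective ψ ∧ (ψ γ : G) = g} =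
      Nat.card {φ : Γ →* G // Surjective φ ∧ φ γ = g} := by
  refine Nat.card_congr (Equiv.ofBijective (fun x =>
    ⟨((Subgroup.topEquiv (G := G)).toMonoidHom.comp x.1 : Γ →* G), ?_, ?_⟩) ⟨?_, ?_⟩)
  · exact (Subgroup.topEquiv.surjective).comp x.2.1
  · exact x.2.2
  · rintro ⟨ψ₁, h₁⟩ ⟨ψ₂, h₂⟩ h
    simp only [Subtype.mk.injEq] at h ⊢
    ext x
    exact congrArg (fun f : Γ →* G => f x) h
  · rintro ⟨φ, hs, hγ⟩
    refine ⟨⟨(Subgroup.topEquiv (G := G)).symm.toMonoidHom.comp φ, ?_, ?_⟩, ?_⟩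
    · exact (Subgroup.topEquiv.symm.surjective).comp hs
    · simpa using hγ
    · ext x; simp

lemma restrict_card_mem (G : Type) [Group G] [Finite G] (H : Subgroup G) (γ : Γ) (g : G)
    (hg : g ∈ H) :
    Nat.card {ψ : Γ →* H // Surjective ψ ∧ (ψ γ : G) = g} =
      Nat.card {ψ : Γ →* H // Surjective ψ ∧ ψ γ = ⟨g, hg⟩} := by
  refine Nat.card_congr (Equiv.subtypeEquivRight fun ψ => ?_)
  constructor
  · rintro ⟨hs, hγ⟩; exact ⟨hs, Subtype.ext hγ⟩
  · rintro ⟨hs, hγ⟩; exact ⟨hs, by rw [hγ]⟩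

lemma restrict_card_not_mem (G : Type) [Group G] [Finite G] (H : Subgroup G) (γ : Γ) (g : G)
    (hg : g ∉ H) :
    Nat.card {ψ : Γ →* H // Surjective ψ ∧ (ψ γ : G) = g} = 0 := by
  have : IsEmpty {ψ : Γ →* H // Surjective ψ ∧ (ψ γ : G) = g} := by
    refine ⟨fun x => hg ?_⟩
    rw [← x.2.2]
    exact (x.1 γ).2
  exact Nat.card_of_isEmpty

lemma card_lt_of_ne_top (G : Type) [Group G] [Finite G] (H : Subgroup G) (hH : H ≠ ⊤) :
    Nat.card H < Nat.card G := by
  rw [← H.index_mul_card]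
  exact lt_mul_of_one_lt_left Nat.card_pos (Subgroup.one_lt_index_of_ne_top hH)

lemma epi_of_hom (γ₁ γ₂ : Γ)
    (h : ∀ (G : Type) [Group G] [Finite G] (g : G),
        Nat.card {φ : Γ →* G // φ γ₁ = g} = Nat.card {φ : Γ →* G // φ γ₂ = g}) :
    ∀ (n : ℕ) (G : Type) [Group G] [Finite G], Nat.card G ≤ n → ∀ g : G,
      Nat.card {φ : Γ →* G // Surjective φ ∧ φ γ₁ = g} =
        Nat.card {φ : Γ →* G // Surjective φ ∧ φ γ₂ = g} := by
  intro n
  induction n with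
  | zero =>
    intro G _ _ hle
    have : 0 < Nat.card G := Nat.card_pos
    omega
  | succ n ih =>
    intro G _ _ hle g
    classical
    have : Fintype (Subgroup G) := Fintype.ofFinite _
    have hsum := h G g
    rw [hom_card_eq_sum G γ₁ g, hom_card_eq_sum G γ₂ g,
      ← Finset.add_sum_erase _ _ (Finset.mem_univ (⊤ : Subgroup G)),
      ← Finset.add_sum_erase _ _ (Finset.mem_univ (⊤ : Subgroup G))] at hsum
    have herase :
        ∑ H ∈ Finset.univ.erase (⊤ : Subgroup G),
          Nat.card {ψ : Γ →* H // Surjective ψ ∧ (ψ γ₁ : G) = g} =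
        ∑ H ∈ Finset.univ.erase (⊤ : Subgroup G),
          Nat.card {ψ : Γ →* H // Surjective ψ ∧ (ψ γ₂ : G) = g} := by
      refine Finset.sum_congr rfl fun H hH => ?_
      have hne : H ≠ ⊤ := Finset.ne_of_mem_erase hH
      have hlt : Nat.card H < Nat.card G := card_lt_of_ne_top G H hne
      by_cases hg : g ∈ H
      · rw [restrict_card_mem G H γ₁ g hg, restrict_card_mem G H γ₂ g hg]
        exact ih H (by omega) ⟨g, hg⟩
      · rw [restrict_card_not_mem G H γ₁ g hg, restrict_card_not_mem G H γ₂ g hg]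
    rw [herase] at hsum
    have htop := Nat.add_right_cancel hsum
    rwa [epi_top_card G γ₁ g, epi_top_card G γ₂ g] at htop

end helpers



/-- For a finitely generated group `Γ` and `γ₁ γ₂ : Γ`, the following are equivalent:
(i) for every finite group `G` and `g : G`, the number of homomorphisms `φ : Γ →* G`
with `φ γ₁ = g` equals the number with `φ γ₂ = g`;
(ii) the same with homomorphisms replaced by surjective homomorphisms. -/
theorem sameMeasure_iff_sameEpiMeasure
    (Γ : Type) [Group Γ] [Group.FG Γ] (γ₁ γ₂ : Γ) :
    (∀ (G : Type) [Group G] [Finite G] (g : G),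
        Nat.card {φ : Γ →* G // φ γ₁ = g} = Nat.card {φ : Γ →* G // φ γ₂ = g}) ↔
    (∀ (G : Type) [Group G] [Finite G] (g : G),
        Nat.card {φ : Γ →* G // Function.Surjective φ ∧ φ γ₁ = g} =
          Nat.card {φ : Γ →* G // Function.Surjective φ ∧ φ γ₂ = g}) := by
  constructor
  · intro h G _ _ g
    exact epi_of_hom γ₁ γ₂ h (Nat.card G) G le_rfl g
  · intro h G _ _ g
    classical
    have : Fintype (Subgroup G) := Fintype.ofFinite _
    rw [hom_card_eq_sum G γ₁ g, hom_card_eq_sum G γ₂ g]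
    refine Finset.sum_congr rfl fun H _ => ?_
    by_cases hg : g ∈ H
    · rw [restrict_card_mem G H γ₁ g hg, restrict_card_mem G H γ₂ g hg]
      exact h H ⟨g, hg⟩
    · rw [restrict_card_not_mem G H γ₁ g hg, restrict_card_not_mem G H γ₂ g hg]
end

section
/- Let Γ be a finitely generated group and γ_1, γ_2 ∈ Γ. Suppose that for every finite group G, the sets of possible images under surjections coincide: {φ(γ_1) : φ ∈ Epi(Γ,G)} = {φ(γ_2) : φ ∈ Epi(Γ,G)}. Then for every finite group G, writing K = K_Γ(G), there exists an automorphism of Γ/K mapping γ_1K to γ_2K. -/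
/-- `Kgrp Γ G` is the intersection of all normal subgroups `N ◁ Γ` with `Γ/N ≅ G`
(equivalently, of the kernels of all surjective homomorphisms `Γ →* G`); it equals
`Γ` if `G` is not a quotient of `Γ`. -/
def Kgrp (Γ : Type) [Group Γ] (G : Type) [Group G] : Subgroup Γ :=
  ⨅ (φ : Γ →* G) (_ : Function.Surjective φ), φ.ker

instance Kgrp_normal (Γ : Type) [Group Γ] (G : Type) [Group G] : (Kgrp Γ G).Normal := by
  constructor
  intro n hn g
  simp only [Kgrp, Subgroup.mem_iInf] at hn ⊢
  intro φ hφ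
  have h1 := hn φ hφ
  simp only [MonoidHom.mem_ker] at h1 ⊢
  simp [map_mul, h1]

/-- If `Γ` is finitely generated and `G` is finite, there are finitely many
homomorphisms `Γ →* G`. -/
lemma finite_monoidHom (Γ : Type) [Group Γ] [Group.FG Γ] (G : Type) [Group G] [Finite G] :
    Finite (Γ →* G) := by
  obtain ⟨S, hS, hSfin⟩ := Group.fg_iff.mp ‹Group.FG Γ›
  have : Finite S := hSfin
  refine Finite.of_injective (fun φ : Γ →* G => fun s : S => φ s) ?_
  intro φ ψ hφψ
  refine MonoidHom.eq_of_eqOn_dense hS ?_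
  intro x hx
  exact congrFun hφψ ⟨x, hx⟩

lemma Kgrp_finiteIndex (Γ : Type) [Group Γ] [Group.FG Γ] (G : Type) [Group G] [Finite G] :
    (Kgrp Γ G).FiniteIndex := by
  have : Finite (Γ →* G) := finite_monoidHom Γ G
  unfold Kgrp
  have : ∀ φ : Γ →* G, (⨅ (_ : Function.Surjective φ), φ.ker).FiniteIndex := by
    intro φ
    by_cases hφ : Function.Surjective φ
    · simp only [iInf_pos hφ]
      have : Finite φ.range := Subgroup.instFiniteSubtypeMem _
      exact Subgroup.finiteIndex_ker φ
    · simp only [iInf_neg hφ]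
      infer_instance
  exact Subgroup.finiteIndex_iInf fun φ => this φ

lemma Kgrp_le_ker (Γ : Type) [Group Γ] (G : Type) [Group G] {φ : Γ →* G}
    (hφ : Function.Surjective φ) : Kgrp Γ G ≤ φ.ker := by
  intro x hx
  simp only [Kgrp, Subgroup.mem_iInf] at hx
  exact hx φ hφ

/-- Let `Γ` be a finitely generated group and `γ₁, γ₂ ∈ Γ`.  If for every finite group
`G` the sets of possible images of `γ₁` and `γ₂` under surjections `Γ → G` coincide,
then for every finite group `G` there is an automorphism of `Γ / K_Γ(G)` mapping
`γ₁ K` to `γ₂ K`. -/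
theorem autEquiv_in_quotient_of_same_epi_images
    (Γ : Type) [Group Γ] [Group.FG Γ] (γ₁ γ₂ : Γ)
    (h : ∀ (G : Type) [Group G] [Finite G],
      {g : G | ∃ φ : Γ →* G, Function.Surjective φ ∧ φ γ₁ = g} =
        {g : G | ∃ φ : Γ →* G, Function.Surjective φ ∧ φ γ₂ = g}) :
    ∀ (G : Type) [Group G] [Finite G],
      ∃ θ : MulAut (Γ ⧸ Kgrp Γ G),
        θ (QuotientGroup.mk γ₁) = QuotientGroup.mk γ₂ := by
  intro G _ _
  set K := Kgrp Γ G with hK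
  have hFI : K.FiniteIndex := Kgrp_finiteIndex Γ G
  have hQfin : Finite (Γ ⧸ K) := K.finite_quotient_of_finiteIndex
  set π : Γ →* Γ ⧸ K := QuotientGroup.mk' K with hπ
  have hπsurj : Function.Surjective π := QuotientGroup.mk'_surjective K
  -- π γ₂ is an image of γ₂ under a surjection, hence also an image of γ₁
  have hmem : (π γ₂) ∈ {g : Γ ⧸ K | ∃ φ : Γ →* Γ ⧸ K, Function.Surjective φ ∧ φ γ₁ = g} := by
    rw [h (Γ ⧸ K)]
    exact ⟨π, hπsurj, rfl⟩
  obtain ⟨ψ, hψsurj, hψγ⟩ := hmem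
  -- K is contained in the kernel of ψ
  have hKker : K ≤ ψ.ker := by
    intro k hk
    -- ψ k lies in Kgrp (Γ ⧸ K) G
    have h1 : ψ k ∈ Kgrp (Γ ⧸ K) G := by
      simp only [Kgrp, Subgroup.mem_iInf]
      intro φ' hφ'
      have : Function.Surjective (φ'.comp ψ) := hφ'.comp hψsurj
      have := Kgrp_le_ker Γ G this hk
      simpa using this
    -- Kgrp (Γ ⧸ K) G = ⊥
    obtain ⟨y, hy⟩ := hπsurj (ψ k)
    have h2 : y ∈ K := by
      simp only [hK, Kgrp, Subgroup.mem_iInf]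
      intro φ hφ
      have hle : K ≤ φ.ker := Kgrp_le_ker Γ G hφ
      set φ' : Γ ⧸ K →* G := QuotientGroup.lift K φ hle with hφ'
      have hφ'surj : Function.Surjective φ' := by
        intro g
        obtain ⟨x, rfl⟩ := hφ g
        exact ⟨π x, rfl⟩
      simp only [Kgrp, Subgroup.mem_iInf] at h1
      have h3 := h1 φ' hφ'surj
      rw [← hy] at h3
      exact h3
    have : ψ k = 1 := by rw [← hy]; exact (QuotientGroup.eq_one_iff y).mpr h2
    exact this
  -- ψ descends to a surjective endomorphism of Γ ⧸ K
  set θ₀ : Γ ⧸ K →* Γ ⧸ K := QuotientGroup.lift K ψ hKker with hθ₀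
  have hθ₀surj : Function.Surjective θ₀ := by
    intro q
    obtain ⟨x, rfl⟩ := hψsurj q
    exact ⟨π x, rfl⟩
  have hθ₀inj : Function.Injective θ₀ := Finite.injective_iff_surjective.mpr hθ₀surj
  refine ⟨MulEquiv.ofBijective θ₀ ⟨hθ₀inj, hθ₀surj⟩, ?_⟩
  show θ₀ (QuotientGroup.mk γ₁) = QuotientGroup.mk γ₂
  exact hψγ
end

section
/- Let b, t ∈ ℤ_{≥1} with b | t, let N ≥ 2bt, and let σ ∈ S_N be a uniformly random permutation. Then E[c_t(σ^b)] = 1/t and E[c_t(σ^b)^2] = b/t + 1/t^2. -/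
set_option linter.unusedSectionVars false
set_option maxHeartbeats 1600000
open Equiv Function Finset
open Fin.NatCast

namespace CycleAux

variable {α : Type*} [Fintype α] [DecidableEq α]




lemma mem_periodicPts_perm (σ : Perm α) (x : α) : x ∈ periodicPts σ := by
  refine ⟨orderOf σ, orderOf_pos σ, ?_⟩
  simp only [IsPeriodicPt, IsFixedPt, Equiv.Perm.iterate_eq_pow, pow_orderOf_eq_one]
  rfl

lemma sameCycle_iff_nat (σ : Perm α) (x y : α) : σ.SameCycle x y ↔ ∃ k : ℕ, (σ ^ k) x = y := by
  constructor
  · intro h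
    obtain ⟨i, _, h⟩ := h.exists_pow_eq'
    exact ⟨i, h⟩
  · rintro ⟨k, rfl⟩
    exact ⟨(k : ℤ), by simp [zpow_natCast]⟩

lemma card_sameCycle (σ : Perm α) (x : α) :
    Nat.card {y // σ.SameCycle x y} = minimalPeriod σ x := by
  classical
  have hper := mem_periodicPts_perm σ x
  have hpos : 0 < minimalPeriod σ x := minimalPeriod_pos_of_mem_periodicPts hper
  rw [Nat.card_eq_fintype_card, ← Fintype.card_fin (minimalPeriod σ x)]
  refine Fintype.card_congr (Equiv.symm (Equiv.ofBijective
    (fun i : Fin (minimalPeriod σ x) => ⟨(σ ^ (i : ℕ)) x, (sameCycle_iff_nat σ x _).2 ⟨i, rfl⟩⟩)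
    ⟨?_, ?_⟩))
  · intro i j h
    have h' : (σ ^ (i : ℕ)) x = (σ ^ (j : ℕ)) x := congrArg Subtype.val h
    exact Fin.ext (iterate_injOn_Iio_minimalPeriod i.2 j.2 h')
  · rintro ⟨y, hy⟩
    obtain ⟨k, hk⟩ := (sameCycle_iff_nat σ x y).1 hy
    refine ⟨⟨k % minimalPeriod σ x, Nat.mod_lt _ hpos⟩, ?_⟩
    have : (σ ^ (k % minimalPeriod σ x)) x = (σ ^ k) x := by
      have := iterate_mod_minimalPeriod_eq (f := ⇑σ) (x := x) (n := k)
      simpa only [Equiv.Perm.iterate_eq_pow] using this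
    exact Subtype.ext (this.trans hk)

lemma minimalPeriod_pow (σ : Perm α) (x : α) (b : ℕ) :
    minimalPeriod (σ ^ b) x = minimalPeriod σ x / Nat.gcd (minimalPeriod σ x) b := by
  have := minimalPeriod_iterate_eq_div_gcd' (f := ⇑σ) (n := b) (mem_periodicPts_perm σ x)
  simpa only [Equiv.Perm.iterate_eq_pow] using this

lemma minimalPeriod_pow_eq_iff {σ : Perm α} {x : α} {b t : ℕ} (hb : 0 < b) (hbt : b ∣ t) :
    minimalPeriod (σ ^ b) x = t ↔ minimalPeriod σ x = t * b := by
  rw [minimalPeriod_pow σ x b]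
  constructor
  · intro h
    have hd : Nat.gcd (minimalPeriod σ x) b ∣ minimalPeriod σ x := Nat.gcd_dvd_left _ _
    have hm : minimalPeriod σ x = t * Nat.gcd (minimalPeriod σ x) b := by
      rw [← h]; exact (Nat.div_mul_cancel hd).symm
    have hbm : b ∣ minimalPeriod σ x := hm ▸ (hbt.mul_right _)
    rw [Nat.gcd_eq_right hbm] at hm
    exact hm
  · intro h
    rw [h, Nat.gcd_eq_right (dvd_mul_left b t), Nat.mul_div_cancel _ hb]

lemma sameCycle_minimalPeriod {σ : Perm α} {x y : α} (h : σ.SameCycle x y) :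
    minimalPeriod σ x = minimalPeriod σ y := by
  obtain ⟨k, rfl⟩ := (sameCycle_iff_nat σ x y).1 h
  have h1 : (σ ^ k) x = σ^[k] x := rfl
  rw [h1, minimalPeriod_apply_iterate (mem_periodicPts_perm σ x)]




lemma not_p_apply {p : α → Prop} [DecidablePred p] {σ : Perm α} (g : Perm {a // p a})
    (hσ : ∀ a (ha : p a), σ a = (g ⟨a, ha⟩ : α)) {a : α} (ha : ¬ p a) : ¬ p (σ a) := by
  intro hpa
  set s : Finset α := univ.filter p with hs
  have hmaps : ∀ b ∈ s, σ b ∈ s := by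
    intro b hb
    have hpb : p b := (mem_filter.1 hb).2
    rw [hσ b hpb]
    exact mem_filter.2 ⟨mem_univ _, (g ⟨b, hpb⟩).2⟩
  have himg : s.image σ = s := by
    apply eq_of_subset_of_card_le
    · intro b hb
      obtain ⟨a', ha', rfl⟩ := mem_image.1 hb
      exact hmaps a' ha'
    · rw [Finset.card_image_of_injective _ σ.injective]
  have : σ a ∈ s := mem_filter.2 ⟨mem_univ _, hpa⟩
  rw [← himg] at this
  obtain ⟨a', ha', heq⟩ := mem_image.1 this
  exact ha (σ.injective heq ▸ (mem_filter.1 ha').2)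

lemma exists_subtypeCongr {p : α → Prop} [DecidablePred p] {σ : Perm α} (g : Perm {a // p a})
    (hσ : ∀ a (ha : p a), σ a = (g ⟨a, ha⟩ : α)) :
    ∃ τ : Perm {a // ¬ p a}, σ = g.subtypeCongr τ := by
  have key : ∀ z : {a // ¬ p a}, ¬ p (σ z.1) := fun z => not_p_apply g hσ z.2
  have hinj : Function.Injective (fun z : {a // ¬ p a} => (⟨σ z, key z⟩ : {a // ¬ p a})) := by
    intro z w h
    exact Subtype.ext (σ.injective (congrArg Subtype.val h))
  refine ⟨Equiv.ofBijective _ (Finite.injective_iff_bijective.1 hinj), ?_⟩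
  ext a
  by_cases ha : p a
  · rw [Equiv.Perm.subtypeCongr.left_apply _ _ ha, hσ a ha]
  · rw [Equiv.Perm.subtypeCongr.right_apply _ _ ha]
    rfl

/-- the bijection between permutations of the complement and permutations agreeing with `g`. -/
noncomputable def agreeEquiv {p : α → Prop} [DecidablePred p] (g : Perm {a // p a}) :
    Perm {a // ¬ p a} ≃ {σ : Perm α // ∀ a (ha : p a), σ a = (g ⟨a, ha⟩ : α)} :=
  Equiv.ofBijective
    (fun τ => ⟨g.subtypeCongr τ, fun a ha => Equiv.Perm.subtypeCongr.left_apply _ _ ha⟩)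
    (by
      constructor
      · intro τ₁ τ₂ h
        ext z
        obtain ⟨a, ha⟩ := z
        have := congrArg (fun σ : {σ : Perm α // _} => (σ : Perm α) a) h
        simp only at this
        rw [Equiv.Perm.subtypeCongr.right_apply _ _ ha,
          Equiv.Perm.subtypeCongr.right_apply _ _ ha] at this
        exact congrArg Subtype.val (Subtype.ext this)
      · rintro ⟨σ, hσ⟩
        obtain ⟨τ, rfl⟩ := exists_subtypeCongr g hσ
        exact ⟨τ, rfl⟩)

lemma agreeEquiv_apply {p : α → Prop} [DecidablePred p] (g : Perm {a // p a})
    (τ : Perm {a // ¬ p a}) : (agreeEquiv g τ : Perm α) = g.subtypeCongr τ := rfl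

lemma card_agree {p : α → Prop} [DecidablePred p] (g : Perm {a // p a}) :
    Nat.card {σ : Perm α // ∀ a (ha : p a), σ a = (g ⟨a, ha⟩ : α)}
      = Nat.factorial (Fintype.card α - Fintype.card {a // p a}) := by
  classical
  rw [← Nat.card_congr (agreeEquiv g), Nat.card_eq_fintype_card, Fintype.card_perm,
    Fintype.card_subtype_compl]

lemma subtypeCongr_pow_apply {p : α → Prop} [DecidablePred p] (g : Perm {a // p a})
    (τ : Perm {a // ¬ p a}) (k : ℕ) {a : α} (ha : ¬ p a) :
    ((g.subtypeCongr τ) ^ k) a = ((τ ^ k) ⟨a, ha⟩ : α) := by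
  induction k generalizing a with
  | zero => simp
  | succ n ih =>
    rw [pow_succ', pow_succ', Equiv.Perm.mul_apply, Equiv.Perm.mul_apply,
      ih ha, Equiv.Perm.subtypeCongr.right_apply _ _ ((τ ^ n) ⟨a, ha⟩).2, Subtype.eta]

lemma minimalPeriod_subtypeCongr {p : α → Prop} [DecidablePred p] (g : Perm {a // p a})
    (τ : Perm {a // ¬ p a}) {a : α} (ha : ¬ p a) :
    minimalPeriod (g.subtypeCongr τ) a = minimalPeriod τ (⟨a, ha⟩ : {a // ¬ p a}) := by
  rw [minimalPeriod_eq_minimalPeriod_iff]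
  intro n
  simp only [IsPeriodicPt, IsFixedPt, Equiv.Perm.iterate_eq_pow]
  rw [subtypeCongr_pow_apply g τ n ha]
  exact ⟨fun h => Subtype.ext h, fun h => congrArg Subtype.val h⟩




/-- the rotation permutation of the range of `f`. -/
noncomputable def rotG {c' : ℕ} (f : Fin (c' + 1) → α) (hf : Injective f) :
    Perm {a // a ∈ Set.range f} :=
  (Equiv.ofInjective f hf).permCongr (finRotate (c' + 1))

lemma rotG_apply {c' : ℕ} (f : Fin (c' + 1) → α) (hf : Injective f) (i : Fin (c' + 1)) :
    (rotG f hf ⟨f i, Set.mem_range_self i⟩ : α) = f (i + 1) := by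
  have hsymm : (Equiv.ofInjective f hf).symm ⟨f i, Set.mem_range_self i⟩ = i := by
    rw [Equiv.symm_apply_eq, Equiv.ofInjective_apply]
  rw [rotG, Equiv.permCongr_apply, hsymm, finRotate_succ_apply, Equiv.ofInjective_apply]

section Steps

variable {c' : ℕ} {f : Fin (c' + 1) → α} (hf : Injective f) {x : α} (h0 : f 0 = x) {σ : Perm α}
include hf h0

lemma stepA (hσ : ∀ a (ha : a ∈ Set.range f), σ a = (rotG f hf ⟨a, ha⟩ : α)) :
    ∀ k : ℕ, (σ ^ k) x = f (k : Fin (c' + 1)) := by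
  intro k
  induction k with
  | zero => simp [← h0]
  | succ n ih =>
    rw [pow_succ', Equiv.Perm.mul_apply, ih, hσ (f (n : Fin (c' + 1))) (Set.mem_range_self _),
      rotG_apply f hf]
    congr 1
    push_cast
    ring

lemma stepB (hall : ∀ k : ℕ, (σ ^ k) x = f (k : Fin (c' + 1))) :
    minimalPeriod σ x = c' + 1 := by
  have hper : IsPeriodicPt σ (c' + 1) x := by
    show σ^[c' + 1] x = x
    rw [Equiv.Perm.iterate_eq_pow, hall (c' + 1), Fin.natCast_self, h0]
  have hdvd : minimalPeriod σ x ∣ c' + 1 := hper.minimalPeriod_dvd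
  have hpos : 0 < minimalPeriod σ x := hper.minimalPeriod_pos (Nat.succ_pos _)
  have hx : (σ ^ minimalPeriod σ x) x = x := by
    have := isPeriodicPt_minimalPeriod σ x
    rwa [IsPeriodicPt, IsFixedPt, Equiv.Perm.iterate_eq_pow] at this
  have hcast : ((minimalPeriod σ x : ℕ) : Fin (c' + 1)) = 0 := by
    apply hf
    rw [← hall (minimalPeriod (⇑σ) x), hx]
    exact h0.symm
  have hdvd2 : c' + 1 ∣ minimalPeriod σ x := Fin.natCast_eq_zero.1 hcast
  exact Nat.dvd_antisymm hdvd hdvd2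

lemma stepC (hmp : minimalPeriod σ x = c' + 1)
    (hΦ : ∀ i : Fin (c' + 1), (σ ^ (i : ℕ)) x = f i) :
    ∀ k : ℕ, (σ ^ k) x = f (k : Fin (c' + 1)) := by
  intro k
  have h1 : (σ ^ (k % (c' + 1))) x = (σ ^ k) x := by
    have := iterate_mod_minimalPeriod_eq (f := ⇑σ) (x := x) (n := k)
    rw [hmp] at this
    simpa only [Equiv.Perm.iterate_eq_pow] using this
  have h2 := hΦ ((k : Fin (c' + 1)))
  rw [Fin.val_natCast] at h2
  rw [← h1, h2]

lemma stepD (hall : ∀ k : ℕ, (σ ^ k) x = f (k : Fin (c' + 1))) :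
    ∀ a (ha : a ∈ Set.range f), σ a = (rotG f hf ⟨a, ha⟩ : α) := by
  rintro a ha
  obtain ⟨i, rfl⟩ := ha
  have e1 : f i = (σ ^ (i : ℕ)) x := by rw [hall (i : ℕ), Fin.cast_val_eq_self]
  have e2 : σ (f i) = (σ ^ ((i : ℕ) + 1)) x := by
    rw [pow_succ', Equiv.Perm.mul_apply, ← e1]
  have e3 : (σ ^ ((i : ℕ) + 1)) x = f (i + 1) := by
    rw [hall ((i : ℕ) + 1)]
    congr 1
    push_cast
    rfl
  have : (rotG f hf ⟨f i, Set.mem_range_self i⟩ : α) = f (i + 1) := rotG_apply f hf i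
  rw [e2, e3, ← this]

end Steps




lemma card_ne (x : α) : Fintype.card {a // a ≠ x} = Fintype.card α - 1 := by
  have := Fintype.card_subtype_compl (fun a : α => a = x)
  simpa [Fintype.card_subtype_eq] using this

lemma card_ne_ne {x y : α} (hxy : x ≠ y) :
    Fintype.card {a // a ≠ x ∧ a ≠ y} = Fintype.card α - 2 := by
  classical
  rw [Fintype.card_subtype]
  have h1 : (univ.filter fun a : α => a ≠ x ∧ a ≠ y) = univ \ ({x, y} : Finset α) := by
    ext a
    simp [not_or]
  rw [h1, Finset.card_sdiff_of_subset (subset_univ _), Finset.card_pair hxy, Finset.card_univ]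

/-- counting injective tuples starting at `x`. -/
noncomputable def equivA (x : α) (c' : ℕ) :
    {f : Fin (c' + 1) → α // Injective f ∧ f 0 = x} ≃ (Fin c' ↪ {a // a ≠ x}) where
  toFun F := ⟨fun j => ⟨F.1 j.succ, fun h => Fin.succ_ne_zero j (F.2.1 (h.trans F.2.2.symm))⟩,
    fun j j' h => Fin.succ_injective _ (F.2.1 (congrArg Subtype.val h))⟩
  invFun e := ⟨Fin.cons x (fun j => (e j).1), by
    constructor
    · intro i i' h
      induction i using Fin.cases with
      | zero =>
        induction i' using Fin.cases with
        | zero => rfl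
        | succ j' =>
          rw [Fin.cons_zero, Fin.cons_succ] at h
          exact absurd h.symm (e j').2
      | succ j =>
        induction i' using Fin.cases with
        | zero =>
          rw [Fin.cons_zero, Fin.cons_succ] at h
          exact absurd h (e j).2
        | succ j' =>
          rw [Fin.cons_succ, Fin.cons_succ] at h
          exact congrArg Fin.succ (e.injective (Subtype.ext h))
    · exact Fin.cons_zero _ _⟩
  left_inv F := by
    apply Subtype.ext
    funext i
    induction i using Fin.cases with
    | zero => simp [F.2.2]
    | succ j => simp; rfl
  right_inv e := by
    apply DFunLike.ext
    intro j
    apply Subtype.ext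
    simp

lemma cardGA (x : α) (c' : ℕ) :
    Nat.card {f : Fin (c' + 1) → α // Injective f ∧ f 0 = x}
      = (Fintype.card α - 1).descFactorial c' := by
  rw [Nat.card_congr (equivA x c'), Nat.card_eq_fintype_card, Fintype.card_embedding_eq,
    card_ne, Fintype.card_fin]

/-- counting injective tuples starting at `x` avoiding `y`. -/
noncomputable def equivB {x y : α} (hxy : x ≠ y) (c' : ℕ) :
    {f : Fin (c' + 1) → α // (Injective f ∧ f 0 = x) ∧ y ∉ Set.range f} ≃
      (Fin c' ↪ {a // a ≠ x ∧ a ≠ y}) where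
  toFun F := ⟨fun j => ⟨F.1 j.succ,
      fun h => Fin.succ_ne_zero j (F.2.1.1 (h.trans F.2.1.2.symm)),
      fun h => F.2.2 ⟨j.succ, h⟩⟩,
    fun j j' h => Fin.succ_injective _ (F.2.1.1 (congrArg Subtype.val h))⟩
  invFun e := ⟨Fin.cons x (fun j => (e j).1), by
    refine ⟨⟨?_, Fin.cons_zero _ _⟩, ?_⟩
    · intro i i' h
      induction i using Fin.cases with
      | zero =>
        induction i' using Fin.cases with
        | zero => rfl
        | succ j' =>
          rw [Fin.cons_zero, Fin.cons_succ] at h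
          exact absurd h.symm (e j').2.1
      | succ j =>
        induction i' using Fin.cases with
        | zero =>
          rw [Fin.cons_zero, Fin.cons_succ] at h
          exact absurd h (e j).2.1
        | succ j' =>
          rw [Fin.cons_succ, Fin.cons_succ] at h
          exact congrArg Fin.succ (e.injective (Subtype.ext h))
    · rintro ⟨i, hi⟩
      induction i using Fin.cases with
      | zero => rw [Fin.cons_zero] at hi; exact hxy hi
      | succ j => rw [Fin.cons_succ] at hi; exact (e j).2.2 hi⟩
  left_inv F := by
    apply Subtype.ext
    funext i
    induction i using Fin.cases with
    | zero => simp [F.2.1.2]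
    | succ j => simp; rfl
  right_inv e := by
    apply DFunLike.ext
    intro j
    apply Subtype.ext
    simp

lemma cardGB {x y : α} (hxy : x ≠ y) (c' : ℕ) :
    Nat.card {f : Fin (c' + 1) → α // (Injective f ∧ f 0 = x) ∧ y ∉ Set.range f}
      = (Fintype.card α - 2).descFactorial c' := by
  rw [Nat.card_congr (equivB hxy c'), Nat.card_eq_fintype_card, Fintype.card_embedding_eq,
    card_ne_ne hxy, Fintype.card_fin]




lemma card_fiber {c' : ℕ} {f : Fin (c' + 1) → α} (hf : Injective f) {x : α} (h0 : f 0 = x) :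
    Nat.card {σ : Perm α // ∀ k : ℕ, (σ ^ k) x = f (k : Fin (c' + 1))}
      = Nat.factorial (Fintype.card α - (c' + 1)) := by
  classical
  have hiff : ∀ σ : Perm α, (∀ k : ℕ, (σ ^ k) x = f (k : Fin (c' + 1))) ↔
      (∀ a (ha : a ∈ Set.range f), σ a = (rotG f hf ⟨a, ha⟩ : α)) :=
    fun σ => ⟨stepD hf h0, stepA hf h0⟩
  rw [Nat.card_congr (Equiv.subtypeEquivRight hiff), card_agree (rotG f hf)]
  congr 2
  have h := Nat.card_range_of_injective hf
  rw [Nat.card_eq_fintype_card (α := Fin (c' + 1)), Fintype.card_fin] at h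
  have h2 := (Nat.card_eq_fintype_card (α := {a // a ∈ Set.range f})).symm.trans h
  convert h2 using 2

lemma filter_card_eq_ncard {β : Type*} [Fintype β] (P : β → Prop) [DecidablePred P] :
    (univ.filter P).card = Nat.card {b : β // P b} := by
  rw [Nat.card_eq_fintype_card, Fintype.card_subtype]

lemma countL1 (x : α) (c' : ℕ) (hc : c' + 1 ≤ Fintype.card α) :
    Nat.card {σ : Perm α // minimalPeriod σ x = c' + 1}
      = Nat.factorial (Fintype.card α - 1) := by
  classical
  set c := c' + 1 with hcdef
  set Φ : Perm α → (Fin c → α) := fun σ i => (σ ^ (i : ℕ)) x with hΦ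
  set S : Finset (Perm α) := univ.filter (fun σ => minimalPeriod σ x = c) with hS
  set G : Finset (Fin c → α) := univ.filter (fun f => Injective f ∧ f 0 = x) with hG
  have hfib : ∀ f ∈ G, (S.filter fun σ => Φ σ = f).card
      = Nat.factorial (Fintype.card α - c) := by
    intro f hfG
    obtain ⟨hfinj, hf0⟩ := (mem_filter.1 hfG).2
    have hiff : ∀ σ : Perm α, (minimalPeriod σ x = c ∧ Φ σ = f) ↔
        (∀ k : ℕ, (σ ^ k) x = f (k : Fin c)) := by
      intro σ
      constructor
      · rintro ⟨h1, h2⟩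
        exact stepC hfinj hf0 h1 (fun i => congrFun h2 i)
      · intro hall
        refine ⟨stepB hfinj hf0 hall, funext fun i => ?_⟩
        have := hall (i : ℕ)
        rwa [Fin.cast_val_eq_self] at this
    rw [hS, filter_filter, filter_card_eq_ncard, Nat.card_congr (Equiv.subtypeEquivRight hiff),
      card_fiber hfinj hf0]
  have himg : S.image Φ = G := by
    ext f
    simp only [hG, mem_image, mem_filter, mem_univ, true_and]
    constructor
    · rintro ⟨σ, hσS, rfl⟩
      have hmp : minimalPeriod σ x = c := (mem_filter.1 hσS).2
      constructor
      · intro i j hij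
        refine Fin.ext (iterate_injOn_Iio_minimalPeriod (f := ⇑σ) (x := x) ?_ ?_ ?_)
        · rw [Set.mem_Iio, hmp]; exact i.2
        · rw [Set.mem_Iio, hmp]; exact j.2
        · exact hij
      · show (σ ^ ((0 : Fin c) : ℕ)) x = x
        simp
    · rintro ⟨hfinj, hf0⟩
      refine ⟨(rotG f hfinj).subtypeCongr 1, ?_, ?_⟩
      · have hAgr : ∀ a (ha : a ∈ Set.range f),
            ((rotG f hfinj).subtypeCongr 1) a = (rotG f hfinj ⟨a, ha⟩ : α) :=
          fun a ha => Equiv.Perm.subtypeCongr.left_apply _ _ ha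
        exact mem_filter.2 ⟨mem_univ _, stepB hfinj hf0 (stepA hfinj hf0 hAgr)⟩
      · funext i
        have := stepA hfinj hf0
          (fun a ha => Equiv.Perm.subtypeCongr.left_apply (rotG f hfinj) 1 ha) (i : ℕ)
        rw [hΦ]
        rwa [Fin.cast_val_eq_self] at this
  have hcard : S.card = G.card * Nat.factorial (Fintype.card α - c) := by
    rw [card_eq_sum_card_image Φ S, himg]
    exact Finset.sum_const_nat hfib
  have hGcard : G.card = (Fintype.card α - 1).descFactorial c' := by
    rw [hG, filter_card_eq_ncard, cardGA x c']
  have hScard : Nat.card {σ : Perm α // minimalPeriod σ x = c} = S.card := by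
    rw [hS, filter_card_eq_ncard]
  rw [hScard, hcard, hGcard]
  have h1 : Fintype.card α - c = (Fintype.card α - 1) - c' := by omega
  have h2 : c' ≤ Fintype.card α - 1 := by omega
  rw [h1, Nat.descFactorial_eq_factorial_mul_choose]
  calc c'.factorial * ((Fintype.card α - 1).choose c')
        * ((Fintype.card α - 1) - c').factorial
      = (Fintype.card α - 1).choose c' * c'.factorial
        * ((Fintype.card α - 1) - c').factorial := by ring
    _ = (Fintype.card α - 1).factorial := Nat.choose_mul_factorial_mul_factorial h2

lemma card_mem_range {c' : ℕ} {f : Fin (c' + 1) → α} (hf : Injective f) :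
    Fintype.card {a // a ∈ Set.range f} = c' + 1 := by
  have h := Nat.card_range_of_injective hf
  rw [Nat.card_eq_fintype_card (α := Fin (c' + 1)), Fintype.card_fin] at h
  have h2 := (Nat.card_eq_fintype_card (α := {a // a ∈ Set.range f})).symm.trans h
  convert h2 using 2

lemma card_not_mem_range {c' : ℕ} {f : Fin (c' + 1) → α} (hf : Injective f) :
    Fintype.card {a // ¬ a ∈ Set.range f} = Fintype.card α - (c' + 1) := by
  classical
  rw [Fintype.card_subtype_compl, card_mem_range hf]

lemma card_fiber2 {c' : ℕ} {f : Fin (c' + 1) → α} (hf : Injective f) {x y : α} (h0 : f 0 = x)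
    (hy : y ∉ Set.range f) (hcc : 2 * (c' + 1) ≤ Fintype.card α) :
    Nat.card {σ : Perm α // (∀ k : ℕ, (σ ^ k) x = f (k : Fin (c' + 1)))
        ∧ minimalPeriod σ y = c' + 1}
      = Nat.factorial (Fintype.card α - (c' + 1) - 1) := by
  classical
  have hiff : ∀ σ : Perm α,
      ((∀ k : ℕ, (σ ^ k) x = f (k : Fin (c' + 1))) ∧ minimalPeriod σ y = c' + 1) ↔
      ((∀ a (ha : a ∈ Set.range f), σ a = (rotG f hf ⟨a, ha⟩ : α))
        ∧ minimalPeriod σ y = c' + 1) :=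
    fun σ => and_congr_left' ⟨stepD hf h0, stepA hf h0⟩
  rw [Nat.card_congr (Equiv.subtypeEquivRight hiff)]
  have hy' : ¬ y ∈ Set.range f := hy
  set g := rotG f hf with hg
  have key : Nat.card {τ : Perm {a // ¬ a ∈ Set.range f} //
        minimalPeriod τ (⟨y, hy'⟩ : {a // ¬ a ∈ Set.range f}) = c' + 1}
      = Nat.card {σ : Perm α //
      (∀ a (ha : a ∈ Set.range f), σ a = (g ⟨a, ha⟩ : α))
        ∧ minimalPeriod σ y = c' + 1} := by
    refine Nat.card_congr (Equiv.ofBijective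
      (fun τp => ⟨g.subtypeCongr τp.1,
        fun a ha => Equiv.Perm.subtypeCongr.left_apply _ _ ha,
        by rw [minimalPeriod_subtypeCongr g τp.1 hy']; exact τp.2⟩) ⟨?_, ?_⟩)
    · intro τp1 τp2 h
      apply Subtype.ext
      ext z
      obtain ⟨a, ha⟩ := z
      have := congrArg (fun w : {σ : Perm α // _} => (w : Perm α) a) h
      simp only at this
      rw [Equiv.Perm.subtypeCongr.right_apply _ _ ha,
        Equiv.Perm.subtypeCongr.right_apply _ _ ha] at this
      exact congrArg Subtype.val (Subtype.ext this)
    · rintro ⟨σ, hAgr, hmp⟩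
      obtain ⟨τ, rfl⟩ := exists_subtypeCongr g hAgr
      refine ⟨⟨τ, ?_⟩, rfl⟩
      rwa [minimalPeriod_subtypeCongr g τ hy'] at hmp
  rw [← key, countL1 (⟨y, hy'⟩ : {a // ¬ a ∈ Set.range f}) c' ?_, card_not_mem_range hf]
  rw [card_not_mem_range hf]
  omega

lemma phi_inj {σ : Perm α} {x : α} {c' : ℕ} (hmp : minimalPeriod σ x = c' + 1) :
    Injective (fun i : Fin (c' + 1) => (σ ^ (i : ℕ)) x) := by
  intro i j hij
  refine Fin.ext (iterate_injOn_Iio_minimalPeriod (f := ⇑σ) (x := x) ?_ ?_ ?_)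
  · rw [Set.mem_Iio, hmp]; exact i.2
  · rw [Set.mem_Iio, hmp]; exact j.2
  · exact hij

lemma phi_zero (σ : Perm α) (x : α) (c' : ℕ) :
    (fun i : Fin (c' + 1) => (σ ^ (i : ℕ)) x) 0 = x := by simp

lemma phi_all {σ : Perm α} {x : α} {c' : ℕ} (hmp : minimalPeriod σ x = c' + 1) :
    ∀ k : ℕ, (σ ^ k) x = (fun i : Fin (c' + 1) => (σ ^ (i : ℕ)) x) (k : Fin (c' + 1)) :=
  stepC (phi_inj hmp) (phi_zero σ x c') hmp (fun _ => rfl)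

lemma countL2 {x y : α} (hxy : x ≠ y) (c' : ℕ) (hc2 : 2 * (c' + 1) ≤ Fintype.card α) :
    Nat.card {σ : Perm α // minimalPeriod σ x = c' + 1 ∧ minimalPeriod σ y = c' + 1}
      = (c' + 1) * Nat.factorial (Fintype.card α - 2) := by
  classical
  set N := Fintype.card α with hN
  set c := c' + 1 with hcdef
  set Φ : Perm α → (Fin c → α) := fun σ i => (σ ^ (i : ℕ)) x with hΦ
  set G : Finset (Fin c → α) := univ.filter (fun f => Injective f ∧ f 0 = x) with hG
  set G1 : Finset (Fin c → α) :=
    univ.filter (fun f => (Injective f ∧ f 0 = x) ∧ y ∈ Set.range f) with hG1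
  set G2 : Finset (Fin c → α) :=
    univ.filter (fun f => (Injective f ∧ f 0 = x) ∧ ¬ y ∈ Set.range f) with hG2
  set Ssame : Finset (Perm α) := univ.filter
    (fun σ => (minimalPeriod σ x = c ∧ minimalPeriod σ y = c) ∧ σ.SameCycle x y) with hSsame
  set Sdiff : Finset (Perm α) := univ.filter
    (fun σ => (minimalPeriod σ x = c ∧ minimalPeriod σ y = c) ∧ ¬ σ.SameCycle x y) with hSdiff
  -- split
  have hsplit : Nat.card {σ : Perm α // minimalPeriod σ x = c ∧ minimalPeriod σ y = c}
      = Ssame.card + Sdiff.card := by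
    have h1 : (univ.filter
          (fun σ : Perm α => minimalPeriod σ x = c ∧ minimalPeriod σ y = c)).filter
        (fun σ => σ.SameCycle x y) = Ssame := by rw [hSsame, filter_filter]
    have h2 : (univ.filter
          (fun σ : Perm α => minimalPeriod σ x = c ∧ minimalPeriod σ y = c)).filter
        (fun σ => ¬ σ.SameCycle x y) = Sdiff := by rw [hSdiff, filter_filter]
    rw [← filter_card_eq_ncard, ← h1, ← h2, card_filter_add_card_filter_not]
  -- same-cycle part
  have hsame : Ssame.card = G1.card * Nat.factorial (N - c) := by
    rw [Finset.card_eq_sum_card_fiberwise (f := Φ) (t := G1) ?_]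
    · refine Finset.sum_const_nat (fun f hfG1 => ?_)
      obtain ⟨⟨hfinj, hf0⟩, hyr⟩ := (mem_filter.1 hfG1).2
      have hiff : ∀ σ : Perm α,
          (((minimalPeriod σ x = c ∧ minimalPeriod σ y = c) ∧ σ.SameCycle x y) ∧ Φ σ = f)
            ↔ (∀ k : ℕ, (σ ^ k) x = f (k : Fin c)) := by
        intro σ
        constructor
        · rintro ⟨⟨⟨h1, _⟩, _⟩, h2⟩
          exact stepC hfinj hf0 h1 (fun i => congrFun h2 i)
        · intro hall
          have hmp : minimalPeriod σ x = c := stepB hfinj hf0 hall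
          have hsc : σ.SameCycle x y := by
            obtain ⟨i, hi⟩ := hyr
            refine (sameCycle_iff_nat σ x y).2 ⟨(i : ℕ), ?_⟩
            rw [hall (i : ℕ), Fin.cast_val_eq_self, hi]
          refine ⟨⟨⟨hmp, ?_⟩, hsc⟩, funext fun i => ?_⟩
          · rw [← sameCycle_minimalPeriod hsc, hmp]
          · have := hall (i : ℕ)
            rwa [Fin.cast_val_eq_self] at this
      rw [hSsame, filter_filter, filter_card_eq_ncard,
        Nat.card_congr (Equiv.subtypeEquivRight hiff), card_fiber hfinj hf0]
    · intro σ hσ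
      obtain ⟨⟨hmpx, _⟩, hsc⟩ := (mem_filter.1 hσ).2
      refine mem_filter.2 ⟨mem_univ _, ⟨phi_inj hmpx, phi_zero σ x c'⟩, ?_⟩
      obtain ⟨k, hk⟩ := (sameCycle_iff_nat σ x y).1 hsc
      exact ⟨(k : Fin c), (phi_all hmpx k).symm.trans hk⟩
  -- different-cycle part
  have hdiff : Sdiff.card = G2.card * Nat.factorial (N - c - 1) := by
    rw [Finset.card_eq_sum_card_fiberwise (f := Φ) (t := G2) ?_]
    · refine Finset.sum_const_nat (fun f hfG2 => ?_)
      obtain ⟨⟨hfinj, hf0⟩, hyr⟩ := (mem_filter.1 hfG2).2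
      have hiff : ∀ σ : Perm α,
          (((minimalPeriod σ x = c ∧ minimalPeriod σ y = c) ∧ ¬ σ.SameCycle x y) ∧ Φ σ = f)
            ↔ ((∀ k : ℕ, (σ ^ k) x = f (k : Fin c)) ∧ minimalPeriod σ y = c) := by
        intro σ
        constructor
        · rintro ⟨⟨⟨h1, h1'⟩, _⟩, h2⟩
          exact ⟨stepC hfinj hf0 h1 (fun i => congrFun h2 i), h1'⟩
        · rintro ⟨hall, hmpy⟩
          have hmp : minimalPeriod σ x = c := stepB hfinj hf0 hall
          have hnsc : ¬ σ.SameCycle x y := by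
            intro hsc
            obtain ⟨k, hk⟩ := (sameCycle_iff_nat σ x y).1 hsc
            exact hyr ⟨(k : Fin c), by rw [← hall k, hk]⟩
          refine ⟨⟨⟨hmp, hmpy⟩, hnsc⟩, funext fun i => ?_⟩
          have := hall (i : ℕ)
          rwa [Fin.cast_val_eq_self] at this
      rw [hSdiff, filter_filter, filter_card_eq_ncard,
        Nat.card_congr (Equiv.subtypeEquivRight hiff), card_fiber2 hfinj hf0 hyr hc2]
    · intro σ hσ
      obtain ⟨⟨hmpx, _⟩, hnsc⟩ := (mem_filter.1 hσ).2
      refine mem_filter.2 ⟨mem_univ _, ⟨phi_inj hmpx, phi_zero σ x c'⟩, ?_⟩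
      rintro ⟨i, hi⟩
      apply hnsc
      refine (sameCycle_iff_nat σ x y).2 ⟨(i : ℕ), ?_⟩
      have h2 := phi_all hmpx (i : ℕ)
      rw [Fin.cast_val_eq_self] at h2
      exact h2.trans hi
  -- cardinalities of index sets
  have hGcard : G.card = (N - 1).descFactorial c' := by
    rw [hG, filter_card_eq_ncard, cardGA x c']
  have hG2card : G2.card = (N - 2).descFactorial c' := by
    rw [hG2, filter_card_eq_ncard]
    exact cardGB hxy c'
  have hG12 : G1.card + G2.card = G.card := by
    have h1 : G.filter (fun f => y ∈ Set.range f) = G1 := by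
      rw [hG, hG1, filter_filter]
    have h2 : G.filter (fun f => ¬ y ∈ Set.range f) = G2 := by
      rw [hG, hG2, filter_filter]
    rw [← h1, ← h2, card_filter_add_card_filter_not]
  -- arithmetic
  obtain ⟨d, hd⟩ : ∃ d, N = (c' + 1) + (c' + 1) + d := ⟨N - 2 * (c' + 1), by omega⟩
  have e1 : N - c = c' + d + 1 := by omega
  have e2 : N - c - 1 = c' + d := by omega
  have e3 : N - 1 = 2 * c' + d + 1 := by omega
  have e4 : N - 2 = 2 * c' + d := by omega
  rw [e3] at hGcard
  rw [e4] at hG2card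
  have hA : (2 * c' + d + 1).descFactorial c' * Nat.factorial (c' + d + 1)
      = Nat.factorial (2 * c' + d + 1) := by
    rw [Nat.descFactorial_eq_factorial_mul_choose]
    have h2 : c' ≤ 2 * c' + d + 1 := by omega
    have h3 : 2 * c' + d + 1 - c' = c' + d + 1 := by omega
    calc c'.factorial * ((2 * c' + d + 1).choose c') * Nat.factorial (c' + d + 1)
        = (2 * c' + d + 1).choose c' * c'.factorial
          * Nat.factorial (2 * c' + d + 1 - c') := by rw [h3]; ring
      _ = _ := Nat.choose_mul_factorial_mul_factorial h2
  have hB : (2 * c' + d).descFactorial c' * Nat.factorial (c' + d)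
      = Nat.factorial (2 * c' + d) := by
    rw [Nat.descFactorial_eq_factorial_mul_choose]
    have h2 : c' ≤ 2 * c' + d := by omega
    have h3 : 2 * c' + d - c' = c' + d := by omega
    calc c'.factorial * ((2 * c' + d).choose c') * Nat.factorial (c' + d)
        = (2 * c' + d).choose c' * c'.factorial
          * Nat.factorial (2 * c' + d - c') := by rw [h3]; ring
      _ = _ := Nat.choose_mul_factorial_mul_factorial h2
  have hBP : (2 * c' + d).descFactorial c' * Nat.factorial (c' + d + 1)
      = (c' + d + 1) * Nat.factorial (2 * c' + d) := by
    rw [Nat.factorial_succ (c' + d), ← hB]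
    ring
  have hG1card : G1.card
      = (2 * c' + d + 1).descFactorial c' - (2 * c' + d).descFactorial c' := by
    omega
  rw [hsplit, hsame, hdiff, e2, e1, e4, hG1card, hG2card, Nat.sub_mul, hA, hBP, hB,
    Nat.factorial_succ (2 * c' + d)]
  rw [← Nat.sub_mul]
  have h5 : 2 * c' + d + 1 - (c' + d + 1) = c' := by omega
  rw [h5]
  show c' * Nat.factorial (2 * c' + d) + Nat.factorial (2 * c' + d)
    = (c' + 1) * Nat.factorial (2 * c' + d)
  ring

lemma dvd_pcount (σ : Perm α) (c : ℕ) :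
    c ∣ (univ.filter fun x => minimalPeriod σ x = c).card := by
  classical
  rcases Nat.eq_zero_or_pos c with rfl | hc
  · have h0 : (univ.filter fun x : α => minimalPeriod σ x = 0) = ∅ := by
      refine filter_eq_empty_iff.2 (fun x _ => ?_)
      have := minimalPeriod_pos_of_mem_periodicPts (mem_periodicPts_perm σ x)
      omega
    rw [h0]
    simp
  · set S : Finset α := univ.filter (fun x => minimalPeriod σ x = c) with hS
    set q : α → Finset α := fun x => univ.filter (fun y => σ.SameCycle x y) with hq
    rw [card_eq_sum_card_image q S]
    have hfib : ∀ g ∈ S.image q, (S.filter fun x => q x = g).card = c := by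
      intro g hg
      obtain ⟨x₀, hx₀S, rfl⟩ := mem_image.1 hg
      have hx₀c : minimalPeriod σ x₀ = c := (mem_filter.1 hx₀S).2
      have heq : S.filter (fun x => q x = q x₀) = q x₀ := by
        ext z
        constructor
        · intro hz
          obtain ⟨hzS, hzq⟩ := mem_filter.1 hz
          have : z ∈ q z := mem_filter.2 ⟨mem_univ _, Equiv.Perm.SameCycle.refl σ z⟩
          rwa [hzq] at this
        · intro hz
          have hsc : σ.SameCycle x₀ z := (mem_filter.1 hz).2
          refine mem_filter.2 ⟨mem_filter.2 ⟨mem_univ _, ?_⟩, ?_⟩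
          · rw [← sameCycle_minimalPeriod hsc, hx₀c]
          · ext w
            simp only [hq, mem_filter, mem_univ, true_and]
            exact ⟨fun h => hsc.trans h, fun h => hsc.symm.trans h⟩
      rw [heq, hq]
      rw [filter_card_eq_ncard]
      rw [card_sameCycle σ x₀, hx₀c]
    rw [Finset.sum_const_nat hfib]
    exact dvd_mul_left c _

end CycleAux


/-- `cycleCount σ t` is the number of `t`-cycles in the cycle decomposition of the
permutation `σ` (for `t = 1` this counts the fixed points): the cycles of length `t`
correspond to the `⟨σ⟩`-orbits of size `t`, each of which contains `t` points. -/
noncomputable def cycleCount {N : ℕ} (σ : Equiv.Perm (Fin N)) (t : ℕ) : ℕ :=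
  Nat.card {x : Fin N // Nat.card {y : Fin N // σ.SameCycle x y} = t} / t

/-- Let `b, t ≥ 1` with `b ∣ t` and let `N ≥ 2bt`.  For a uniformly random permutation
`σ ∈ S_N`, the expected number of `t`-cycles of `σ ^ b` is `1/t`, and the expected
value of the square of the number of `t`-cycles of `σ ^ b` is `b/t + 1/t²`. -/
theorem expected_cycleCount_of_power
    (b t N : ℕ) (hb : 1 ≤ b) (ht : 1 ≤ t) (hbt : b ∣ t) (hN : 2 * b * t ≤ N) :
    (∑ σ : Equiv.Perm (Fin N), (cycleCount (σ ^ b) t : ℚ)) /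
        (Fintype.card (Equiv.Perm (Fin N))) = 1 / t ∧
    (∑ σ : Equiv.Perm (Fin N), (cycleCount (σ ^ b) t : ℚ) ^ 2) /
        (Fintype.card (Equiv.Perm (Fin N))) = b / t + 1 / t ^ 2 := by
  classical
  open CycleAux Function Finset Equiv in
  obtain ⟨c', hc'⟩ : ∃ c', t * b = c' + 1 := ⟨t * b - 1, by
    have h1 : 1 ≤ t * b := Nat.one_le_iff_ne_zero.2 (Nat.mul_ne_zero (by omega) (by omega))
    omega⟩
  have hcN : c' + 1 ≤ N := by nlinarith
  have h2c : 2 * (c' + 1) ≤ N := by nlinarith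
  have hN2 : 2 ≤ N := by nlinarith
  have tQ : (t : ℚ) ≠ 0 := Nat.cast_ne_zero.2 (by omega)
  have NfQ : ((N.factorial : ℕ) : ℚ) ≠ 0 := Nat.cast_ne_zero.2 N.factorial_ne_zero
  -- pointwise reduction
  have hred : ∀ σ : Equiv.Perm (Fin N), cycleCount (σ ^ b) t
      = (univ.filter fun x : Fin N => minimalPeriod σ x = t * b).card / t := by
    intro σ
    unfold cycleCount
    congr 1
    have h1 : ∀ x : Fin N, (Nat.card {y : Fin N // (σ ^ b).SameCycle x y} = t)
        ↔ minimalPeriod σ x = t * b := by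
      intro x
      rw [card_sameCycle (σ ^ b) x]
      exact minimalPeriod_pow_eq_iff (by omega) hbt
    rw [Nat.card_congr (Equiv.subtypeEquivRight h1), ← filter_card_eq_ncard]
  have hcast : ∀ σ : Equiv.Perm (Fin N), (cycleCount (σ ^ b) t : ℚ)
      = ((univ.filter fun x : Fin N => minimalPeriod σ x = t * b).card : ℚ) / t := by
    intro σ
    rw [hred σ]
    exact Nat.cast_div (dvd_trans (dvd_mul_right t b) (dvd_pcount σ (t * b))) tQ
  -- factorial facts
  have fact1 : N * Nat.factorial (N - 1) = N.factorial := Nat.mul_factorial_pred (by omega)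
  have fact2 : (N - 1) * Nat.factorial (N - 2) = Nat.factorial (N - 1) := by
    have h := Nat.mul_factorial_pred (n := N - 1) (by omega)
    have h2 : N - 1 - 1 = N - 2 := by omega
    rwa [h2] at h
  -- first moment
  have hsum1 : (∑ σ : Equiv.Perm (Fin N),
      (univ.filter fun x : Fin N => minimalPeriod σ x = t * b).card) = N.factorial := by
    calc ∑ σ : Equiv.Perm (Fin N), (univ.filter fun x : Fin N => minimalPeriod σ x = t * b).card
        = ∑ σ : Equiv.Perm (Fin N), ∑ x : Fin N,
            (if minimalPeriod σ x = t * b then 1 else 0) := by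
          exact Finset.sum_congr rfl (fun σ _ => card_filter _ _)
      _ = ∑ x : Fin N, ∑ σ : Equiv.Perm (Fin N),
            (if minimalPeriod σ x = t * b then 1 else 0) := Finset.sum_comm
      _ = ∑ x : Fin N, (univ.filter
            fun σ : Equiv.Perm (Fin N) => minimalPeriod σ x = t * b).card := by
          exact Finset.sum_congr rfl (fun x _ => (card_filter _ _).symm)
      _ = ∑ _x : Fin N, Nat.factorial (N - 1) := by
          refine Finset.sum_congr rfl (fun x _ => ?_)
          rw [filter_card_eq_ncard, hc']
          have h := countL1 x c' (by rw [Fintype.card_fin]; omega)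
          rwa [Fintype.card_fin] at h
      _ = N * Nat.factorial (N - 1) := by
          rw [Finset.sum_const, card_univ, Fintype.card_fin, smul_eq_mul]
      _ = N.factorial := fact1
  -- second moment
  have hsum2 : (∑ σ : Equiv.Perm (Fin N),
      (univ.filter fun x : Fin N => minimalPeriod σ x = t * b).card ^ 2)
      = N.factorial + (t * b) * N.factorial := by
    calc ∑ σ : Equiv.Perm (Fin N),
        (univ.filter fun x : Fin N => minimalPeriod σ x = t * b).card ^ 2
        = ∑ σ : Equiv.Perm (Fin N), ∑ x : Fin N, ∑ y : Fin N,
            (if minimalPeriod σ x = t * b ∧ minimalPeriod σ y = t * b then 1 else 0) := by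
          refine Finset.sum_congr rfl (fun σ _ => ?_)
          rw [card_filter, sq, Finset.sum_mul_sum]
          refine Finset.sum_congr rfl (fun x _ => Finset.sum_congr rfl (fun y _ => ?_))
          by_cases hP : minimalPeriod σ x = t * b <;>
            by_cases hQ : minimalPeriod σ y = t * b <;> simp [hP, hQ]
      _ = ∑ x : Fin N, ∑ y : Fin N, ∑ σ : Equiv.Perm (Fin N),
            (if minimalPeriod σ x = t * b ∧ minimalPeriod σ y = t * b then 1 else 0) := by
          rw [Finset.sum_comm]
          exact Finset.sum_congr rfl (fun x _ => Finset.sum_comm)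
      _ = ∑ x : Fin N, ∑ y : Fin N, (univ.filter fun σ : Equiv.Perm (Fin N) =>
            minimalPeriod σ x = t * b ∧ minimalPeriod σ y = t * b).card := by
          exact Finset.sum_congr rfl (fun x _ => Finset.sum_congr rfl
            (fun y _ => (card_filter _ _).symm))
      _ = ∑ _x : Fin N, (Nat.factorial (N - 1)
            + (N - 1) * ((t * b) * Nat.factorial (N - 2))) := by
          refine Finset.sum_congr rfl (fun x _ => ?_)
          rw [← Finset.add_sum_erase _ _ (mem_univ x)]
          congr 1
          · have hxx : (univ.filter fun σ : Equiv.Perm (Fin N) =>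
                minimalPeriod σ x = t * b ∧ minimalPeriod σ x = t * b)
                = univ.filter (fun σ : Equiv.Perm (Fin N) => minimalPeriod σ x = t * b) := by
              simp only [and_self]
            rw [hxx, filter_card_eq_ncard, hc']
            have h := countL1 x c' (by rw [Fintype.card_fin]; omega)
            rwa [Fintype.card_fin] at h
          · have hone : ∀ y ∈ univ.erase x, (univ.filter fun σ : Equiv.Perm (Fin N) =>
                minimalPeriod σ x = t * b ∧ minimalPeriod σ y = t * b).card
                = (t * b) * Nat.factorial (N - 2) := by
              intro y hy
              have hxy : x ≠ y := (Finset.ne_of_mem_erase hy).symm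
              rw [filter_card_eq_ncard, hc']
              have h := countL2 hxy c' (by rw [Fintype.card_fin]; omega)
              rw [Fintype.card_fin] at h
              rw [h, ← hc']
            rw [Finset.sum_const_nat hone, card_erase_of_mem (mem_univ x), card_univ,
              Fintype.card_fin]
      _ = N * (Nat.factorial (N - 1) + (N - 1) * ((t * b) * Nat.factorial (N - 2))) := by
          rw [Finset.sum_const, card_univ, Fintype.card_fin, smul_eq_mul]
      _ = N.factorial + (t * b) * N.factorial := by
          rw [Nat.mul_add, fact1]
          congr 1
          calc N * ((N - 1) * ((t * b) * Nat.factorial (N - 2)))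
              = (t * b) * (N * ((N - 1) * Nat.factorial (N - 2))) := by ring
            _ = (t * b) * N.factorial := by rw [fact2, fact1]
  -- finish
  rw [Fintype.card_perm, Fintype.card_fin]
  constructor
  · rw [Finset.sum_congr rfl (fun σ _ => hcast σ), ← Finset.sum_div, ← Nat.cast_sum, hsum1]
    field_simp
  · have hsq : ∀ σ : Equiv.Perm (Fin N), (cycleCount (σ ^ b) t : ℚ) ^ 2
        = ((univ.filter fun x : Fin N => minimalPeriod σ x = t * b).card : ℚ) ^ 2 / t ^ 2 := by
      intro σ
      rw [hcast σ, div_pow]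
    rw [Finset.sum_congr rfl (fun σ _ => hsq σ), ← Finset.sum_div]
    have hc2 : (∑ σ : Equiv.Perm (Fin N),
        ((univ.filter fun x : Fin N => minimalPeriod σ x = t * b).card : ℚ) ^ 2)
        = ((∑ σ : Equiv.Perm (Fin N),
          (univ.filter fun x : Fin N => minimalPeriod σ x = t * b).card ^ 2 : ℕ) : ℚ) := by
      rw [Nat.cast_sum]
      exact Finset.sum_congr rfl (fun σ _ => by rw [Nat.cast_pow])
    rw [hc2, hsum2]
    push_cast
    field_simp
    ring
end
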